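/- Let (T(t)) be a C₀-semigroup on a Banach space E with generator (A,dom(A)), 0 ∈ ρ(A), and extrapolation data (E₋₁,ι,T₋₁,A₋₁), and let (𝒰(t)) be the semigroup on 𝓛(E) left implemented by (T(t)), with generator 𝒢. Suppose B ∈ 𝒮^{DS}_{t₀}(T) for some t₀ > 0, and let (S(t)) be the perturbed C₀-semigroup on E generated by (A₋₁+B)|_E (domain {x ∈ E : A₋₁(ιx)+Bx ∈ ι(E)}), which satisfies ι(S(t)x) = ι(T(t)x) + ∫₀^t T₋₁(t−r)B(S(r)x) dr. Define 𝒦 : 𝓛(E) → 𝓛(E,E₋₁) by 𝒦(C) := B∘C. Then 𝒦 ∈ 𝒮^{DS,τ_sot}_{t₀}(𝒰), and the perturbed τ_sot-bi-continuous semigroup (𝒱(t)) on 𝓛(E) generated by (𝒢₋₁+𝒦)|_{𝓛(E)} is left implemented by (S(t)): 𝒱(t)C = S(t)∘C for all t ≥ 0 and C ∈ 𝓛(E). -/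

import Mathlib

open Set Filter Topology MeasureTheory

variable {E E₁ : Type*} [NormedAddCommGroup E] [NormedSpace ℝ E]
  [NormedAddCommGroup E₁] [NormedSpace ℝ E₁]

/-- A `C₀`-semigroup on a Banach space `E`. -/
structure IsC0Semigroup (T : ℝ → E →L[ℝ] E) : Prop where
  map_zero : T 0 = 1
  map_add : ∀ s t : ℝ, 0 ≤ s → 0 ≤ t → T (s + t) = (T s).comp (T t)
  strongCont : ∀ x : E, ContinuousOn (fun t => T t x) (Ici (0:ℝ))

/-- The generator relation of a `C₀`-semigroup: `y = Ax`. -/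
def C0GenRel (T : ℝ → E →L[ℝ] E) (x y : E) : Prop :=
  Tendsto (fun t : ℝ => t⁻¹ • (T t x - x)) (nhdsWithin 0 (Ioi 0)) (nhds y)

/-- Extrapolation data `(E₋₁, ι, T₋₁, A₋₁)` for a `C₀`-semigroup `T` with `0 ∈ ρ(A)`:
`ι : E → E₋₁` is a continuous dense injection, `T₋₁` a `C₀`-semigroup on `E₋₁` extending `T`
via `ι`, whose generator `A₋₁` has domain `ι(E)`, extends `A`, and `Am = A₋₁ ∘ ι : E → E₋₁`
is an isomorphism. -/
structure ExtrapolationData (T : ℝ → E →L[ℝ] E) (T₁ : ℝ → E₁ →L[ℝ] E₁)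
    (ι : E →L[ℝ] E₁) (Am : E ≃L[ℝ] E₁) : Prop where
  c0T : IsC0Semigroup T
  c0T₁ : IsC0Semigroup T₁
  inj : Function.Injective ι
  dense : DenseRange ι
  intertwine : ∀ t : ℝ, 0 ≤ t → ∀ x : E, T₁ t (ι x) = ι (T t x)
  gen₁ : ∀ x : E, C0GenRel T₁ (ι x) (Am x)
  gen₁_dom : ∀ z y : E₁, C0GenRel T₁ z y → z ∈ Set.range ι
  gen_extends : ∀ x y : E, C0GenRel T x y → (Am x : E₁) = ι y
  zero_res : ∃ R : E →L[ℝ] E, (∀ y : E, C0GenRel T (R y) y) ∧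
    ∀ x y : E, C0GenRel T x y → x = R y

/-- The Desch–Schappacher admissibility class `𝒮^{DS}_{t₀}(T)` for a `C₀`-semigroup:
for every strongly continuous `𝓛(E)`-valued `F` the Volterra integrals take values in `ι(E)`,
give a strongly continuous `𝓛(E)`-valued function `V_B F`, and `‖V_B‖ ≤ q < 1`. -/
def MemSDS (T₁ : ℝ → E₁ →L[ℝ] E₁) (ι : E →L[ℝ] E₁) (B : E →L[ℝ] E₁) (t₀ : ℝ) : Prop :=
  ∃ q : ℝ, 0 ≤ q ∧ q < 1 ∧
    ∀ F : ℝ → E →L[ℝ] E, (∀ x : E, ContinuousOn (fun r => F r x) (Icc (0:ℝ) t₀)) →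
      ∃ G : ℝ → E →L[ℝ] E,
        (∀ t ∈ Icc (0:ℝ) t₀, ∀ x : E,
          ι (G t x) = ∫ r in (0:ℝ)..t, T₁ (t - r) (B (F r x))) ∧
        (∀ x : E, ContinuousOn (fun t => G t x) (Icc (0:ℝ) t₀)) ∧
        ∀ c : ℝ, (∀ s ∈ Icc (0:ℝ) t₀, ‖F s‖ ≤ c) → ∀ t ∈ Icc (0:ℝ) t₀, ‖G t‖ ≤ q * c

/-- The semigroup on `𝓛(E)` left implemented by `T`: `𝒰(t)C := T(t) ∘ C`. -/
noncomputable def implemented (T : ℝ → E →L[ℝ] E) (t : ℝ) :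
    (E →L[ℝ] E) →L[ℝ] (E →L[ℝ] E) :=
  ContinuousLinearMap.compL ℝ E E E (T t)

/-- The extrapolated implemented semigroup on `𝓛(E,E₋₁)`: `𝒰₋₁(t)S := T₋₁(t) ∘ S`. -/
noncomputable def implementedExt (T₁ : ℝ → E₁ →L[ℝ] E₁) (t : ℝ) :
    (E →L[ℝ] E₁) →L[ℝ] (E →L[ℝ] E₁) :=
  ContinuousLinearMap.compL ℝ E E₁ E₁ (T₁ t)

/-- Membership in the space `𝔛_{t₀}` of strongly `τ_sot`-continuous, norm-bounded,
bi-equicontinuous functions `F : [0,t₀] → 𝓛(𝓛(E))`. -/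
def MemXsot (t₀ : ℝ) (F : ℝ → (E →L[ℝ] E) →L[ℝ] (E →L[ℝ] E)) : Prop :=
  (∀ (C : E →L[ℝ] E) (x : E), ContinuousOn (fun t => (F t C) x) (Icc (0:ℝ) t₀)) ∧
  (∃ M : ℝ, ∀ t ∈ Icc (0:ℝ) t₀, ‖F t‖ ≤ M) ∧
  ∀ u : ℕ → E →L[ℝ] E, (∃ c : ℝ, ∀ n, ‖u n‖ ≤ c) →
    (∀ x : E, Tendsto (fun n => u n x) atTop (nhds (0:E))) →
    ∀ x : E, ∀ ε > (0:ℝ), ∃ N : ℕ, ∀ n ≥ N, ∀ t ∈ Icc (0:ℝ) t₀, ‖(F t (u n)) x‖ < ε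

/-- The Desch–Schappacher admissibility class `𝒮^{DS,τ_sot}_{t₀}(𝒰)` for the implemented
semigroup: `𝒦 : 𝓛(E) → 𝓛(E,E₋₁)` is `τ_sot`-to-`τ_sot` continuous, and the Volterra operator
`(V_𝒦 F)(t)C = ∫₀ᵗ 𝒰₋₁(t-r) 𝒦(F(r)C) dr` takes values in `𝓛(E)`, maps `𝔛_{t₀}` into itself
and has `‖V_𝒦‖ ≤ q < 1`. -/
def MemSDSsot (T₁ : ℝ → E₁ →L[ℝ] E₁) (ι : E →L[ℝ] E₁)
    (K : (E →L[ℝ] E) →L[ℝ] (E →L[ℝ] E₁)) (t₀ : ℝ) : Prop :=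
  (∀ x : E, ∃ (v : Finset E) (c : ℝ), 0 ≤ c ∧
      ∀ S : E →L[ℝ] E, ‖(K S) x‖ ≤ c * ∑ y ∈ v, ‖S y‖) ∧
  ∃ q : ℝ, 0 ≤ q ∧ q < 1 ∧
    ∀ F : ℝ → (E →L[ℝ] E) →L[ℝ] (E →L[ℝ] E), MemXsot t₀ F →
      ∃ G : ℝ → (E →L[ℝ] E) →L[ℝ] (E →L[ℝ] E), MemXsot t₀ G ∧
        (∀ t ∈ Icc (0:ℝ) t₀, ∀ (C : E →L[ℝ] E) (x : E),
          ι ((G t C) x) = ∫ r in (0:ℝ)..t, T₁ (t - r) ((K (F r C)) x)) ∧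
        ∀ c : ℝ, (∀ s ∈ Icc (0:ℝ) t₀, ‖F s‖ ≤ c) → ∀ t ∈ Icc (0:ℝ) t₀, ‖G t‖ ≤ q * c

/-- A `τ_sot`-bi-continuous semigroup on `𝓛(E)`. -/
structure IsBiContSotSemigroup (U : ℝ → (E →L[ℝ] E) →L[ℝ] (E →L[ℝ] E)) : Prop where
  map_zero : U 0 = 1
  map_add : ∀ s t : ℝ, 0 ≤ s → 0 ≤ t → U (s + t) = (U s).comp (U t)
  strongCont : ∀ (C : E →L[ℝ] E) (x : E), ContinuousOn (fun t => (U t C) x) (Ici (0:ℝ))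
  expBound : ∃ M : ℝ, 1 ≤ M ∧ ∃ ω : ℝ, ∀ t : ℝ, 0 ≤ t → ‖U t‖ ≤ M * Real.exp (ω * t)
  biequi : ∀ t₀ : ℝ, 0 < t₀ → ∀ u : ℕ → E →L[ℝ] E, (∃ c : ℝ, ∀ n, ‖u n‖ ≤ c) →
    (∀ x : E, Tendsto (fun n => u n x) atTop (nhds (0:E))) →
    ∀ x : E, ∀ ε > (0:ℝ), ∃ N : ℕ, ∀ n ≥ N, ∀ t ∈ Icc (0:ℝ) t₀, ‖(U t (u n)) x‖ < ε

/-- The generator relation of a `τ_sot`-bi-continuous semigroup on `𝓛(E)`. -/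
def SotGenRel (U : ℝ → (E →L[ℝ] E) →L[ℝ] (E →L[ℝ] E)) (C Y : E →L[ℝ] E) : Prop :=
  (∀ x : E, Tendsto (fun t : ℝ => t⁻¹ • ((U t C) x - C x))
      (nhdsWithin 0 (Ioi 0)) (nhds (Y x))) ∧
    ∃ M : ℝ, ∀ t ∈ Ioc (0:ℝ) 1, ‖U t C - C‖ ≤ M * t

/-- `V` is a `τ_sot`-bi-continuous semigroup on `𝓛(E)` generated by `(𝒢₋₁ + 𝒦)|_{𝓛(E)}`,
where `𝒢₋₁ C = A₋₁ ∘ ι ∘ C` and the domain is `{C : 𝒢₋₁C + 𝒦C ∈ 𝓛(E)}`. -/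
def GeneratedByPerturbedImpl (V : ℝ → (E →L[ℝ] E) →L[ℝ] (E →L[ℝ] E))
    (ι : E →L[ℝ] E₁) (Am : E ≃L[ℝ] E₁)
    (K : (E →L[ℝ] E) →L[ℝ] (E →L[ℝ] E₁)) : Prop :=
  IsBiContSotSemigroup V ∧ ∀ C Y : E →L[ℝ] E,
    SotGenRel V C Y ↔ ι.comp Y = ((Am : E →L[ℝ] E₁)).comp C + K C

section Aux
variable {X : Type*} [NormedAddCommGroup X] [NormedSpace ℝ X]

lemma IsC0Semigroup.bound [CompleteSpace X] {U : ℝ → X →L[ℝ] X} (hU : IsC0Semigroup U)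
    (a : ℝ) : ∃ M : ℝ, 1 ≤ M ∧ ∀ t ∈ Icc (0:ℝ) a, ‖U t‖ ≤ M := by
  have hpt : ∀ x : X, ∃ C : ℝ, ∀ i : Icc (0:ℝ) a, ‖U i x‖ ≤ C := by
    intro x
    obtain ⟨C, hC⟩ := isCompact_Icc.exists_bound_of_continuousOn
      ((hU.strongCont x).mono (fun s hs => hs.1))
    exact ⟨C, fun i => hC i i.2⟩
  obtain ⟨M₀, hM₀⟩ := banach_steinhaus hpt
  exact ⟨max M₀ 1, le_max_right _ _, fun t ht => le_trans (hM₀ ⟨t, ht⟩) (le_max_left _ _)⟩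

lemma IsC0Semigroup.hasDerivWithinAt {U : ℝ → X →L[ℝ] X} (hU : IsC0Semigroup U)
    {z y : X} (hz : C0GenRel U z y) {t : ℝ} (ht : 0 ≤ t) :
    HasDerivWithinAt (fun s => U s z) (U t y) (Ici t) t := by
  rw [hasDerivWithinAt_iff_tendsto_slope, Set.Ici_sdiff_left]
  have h1 : Tendsto (fun u : ℝ => u - t) (𝓝[>] t) (𝓝[>] (0:ℝ)) := by
    apply tendsto_nhdsWithin_of_tendsto_nhds_of_eventually_within
    · have h0 : Tendsto (fun u : ℝ => u - t) (𝓝 t) (𝓝 (t - t)) :=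
        ((continuous_id.sub continuous_const).tendsto t)
      rw [sub_self] at h0
      exact h0.mono_left nhdsWithin_le_nhds
    · filter_upwards [self_mem_nhdsWithin] with u hu
      exact sub_pos.2 (mem_Ioi.1 hu)
  have h3 : Tendsto (fun w => U t w) (𝓝 y) (𝓝 (U t y)) := (U t).continuous.tendsto y
  have hcomp := h3.comp (hz.comp h1)
  refine hcomp.congr' ?_
  filter_upwards [self_mem_nhdsWithin] with u hu
  have hut : (0:ℝ) ≤ u - t := le_of_lt (sub_pos.2 hu)
  have hadd : U u z = U t (U (u - t) z) := by
    have h := hU.map_add t (u - t) ht hut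
    have h2 : t + (u - t) = u := by ring
    rw [h2] at h
    rw [h]; rfl
  show U t ((u - t)⁻¹ • (U (u - t) z - z)) = slope (fun s => U s z) t u
  rw [slope_def_module, hadd, ContinuousLinearMap.map_smul, ContinuousLinearMap.map_sub]

lemma conv_cont [CompleteSpace X] {U : ℝ → X →L[ℝ] X} (hU : IsC0Semigroup U)
    {a : ℝ} (ha : 0 ≤ a) {f : ℝ → X} (hf : ContinuousOn f (Icc 0 a)) :
    ContinuousOn (fun r => U (a - r) (f r)) (Icc 0 a) := by
  obtain ⟨M, hM1, hM⟩ := hU.bound a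
  intro r₀ hr₀
  have hmem : ∀ r ∈ Icc (0:ℝ) a, a - r ∈ Icc (0:ℝ) a := fun r hr =>
    ⟨by linarith [hr.2], by linarith [hr.1]⟩
  have hcomp : ContinuousWithinAt (fun r => U (a - r) (f r₀)) (Icc 0 a) r₀ := by
    have : ContinuousOn (fun r : ℝ => U (a - r) (f r₀)) (Icc 0 a) :=
      (hU.strongCont (f r₀)).comp (continuous_const.sub continuous_id).continuousOn
        (fun r hr => (hmem r hr).1)
    exact this r₀ hr₀
  have hzero : Tendsto (fun r => U (a - r) (f r - f r₀)) (𝓝[Icc 0 a] r₀) (𝓝 0) := by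
    have hsub : Tendsto (fun r => f r - f r₀) (𝓝[Icc 0 a] r₀) (𝓝 0) := by
      have h0 := Filter.Tendsto.sub_const (hf r₀ hr₀) (f r₀)
      simpa using h0
    have hnorm : Tendsto (fun r => M * ‖f r - f r₀‖) (𝓝[Icc 0 a] r₀) (𝓝 0) := by
      simpa using (hsub.norm.const_mul M)
    apply squeeze_zero_norm' _ hnorm
    filter_upwards [self_mem_nhdsWithin] with r hr
    calc ‖U (a-r) (f r - f r₀)‖ ≤ ‖U (a-r)‖ * ‖f r - f r₀‖ := (U (a-r)).le_opNorm _
    _ ≤ M * ‖f r - f r₀‖ := mul_le_mul_of_nonneg_right (hM _ (hmem r hr)) (norm_nonneg _)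
  have hsum : Tendsto (fun r => U (a - r) (f r - f r₀) + U (a - r) (f r₀)) (𝓝[Icc 0 a] r₀)
      (𝓝 (0 + U (a - r₀) (f r₀))) := hzero.add hcomp
  rw [zero_add] at hsum
  exact hsum.congr (fun r => by rw [map_sub]; abel)

lemma conv_integrable [CompleteSpace X] {U : ℝ → X →L[ℝ] X} (hU : IsC0Semigroup U)
    {a : ℝ} (ha : 0 ≤ a) {f : ℝ → X} (hf : ContinuousOn f (Icc 0 a)) :
    IntervalIntegrable (fun r => U (a - r) (f r)) MeasureTheory.volume 0 a :=
  ContinuousOn.intervalIntegrable_of_Icc ha (conv_cont hU ha hf)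

lemma IsC0Semigroup.expBound [CompleteSpace X] {U : ℝ → X →L[ℝ] X} (hU : IsC0Semigroup U) :
    ∃ M : ℝ, 1 ≤ M ∧ ∃ ω : ℝ, ∀ t : ℝ, 0 ≤ t → ‖U t‖ ≤ M * Real.exp (ω * t) := by
  obtain ⟨M, hM1, hM⟩ := hU.bound 1
  refine ⟨M, hM1, Real.log M, ?_⟩
  have key : ∀ n : ℕ, ∀ t : ℝ, 0 ≤ t → t ≤ n + 1 → ‖U t‖ ≤ M ^ (n + 1) := by
    intro n
    induction n with
    | zero => intro t ht h1; simpa using hM t ⟨ht, by simpa using h1⟩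
    | succ n ih =>
      intro t ht h1
      by_cases hle : t ≤ n + 1
      · exact le_trans (ih t ht hle) (pow_le_pow_right₀ hM1 (by omega))
      · push_neg at hle
        have hn0 : (0:ℝ) ≤ (n:ℝ) := n.cast_nonneg
        have ht1 : (0:ℝ) ≤ t - 1 := by linarith
        have heq : U t = (U 1).comp (U (t - 1)) := by
          have h := hU.map_add 1 (t-1) zero_le_one ht1
          have h2 : 1 + (t - 1) = t := by ring
          rwa [h2] at h
        calc ‖U t‖ ≤ ‖U 1‖ * ‖U (t-1)‖ := by rw [heq]; exact ContinuousLinearMap.opNorm_comp_le _ _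
        _ ≤ M * M ^ (n+1) := mul_le_mul (hM 1 ⟨zero_le_one, le_refl 1⟩)
            (ih (t-1) ht1 (by push_cast at h1 ⊢; linarith)) (norm_nonneg _) (by linarith)
        _ = M ^ (n+1+1) := by ring
  intro t ht
  have hn := Nat.lt_floor_add_one t
  have h' := key ⌊t⌋₊ t ht (le_of_lt (by exact_mod_cast hn))
  have hMpos : (0:ℝ) < M := lt_of_lt_of_le one_pos hM1
  calc ‖U t‖ ≤ M ^ (⌊t⌋₊ + 1) := h'
  _ = M * M ^ (⌊t⌋₊:ℕ) := by ring
  _ ≤ M * Real.exp (Real.log M * t) := by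
      have hexp : (M:ℝ) ^ (⌊t⌋₊:ℕ) = Real.exp ((⌊t⌋₊:ℝ) * Real.log M) := by
        rw [Real.exp_nat_mul, Real.exp_log hMpos]
      rw [hexp, mul_comm (Real.log M) t]
      exact mul_le_mul_of_nonneg_left (Real.exp_le_exp.2
        (mul_le_mul_of_nonneg_right (Nat.floor_le ht) (Real.log_nonneg hM1))) (le_of_lt hMpos)

end Aux

/-- A Desch–Schappacher perturbation `B ∈ 𝒮^{DS}_{t₀}(T)` of a `C₀`-semigroup
induces the admissible multiplication perturbation `𝒦(C) = B∘C` of the implemented semigroup,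
and the perturbed semigroup on `𝓛(E)` is left implemented by the perturbed `C₀`-semigroup. -/
theorem stmt_7 [CompleteSpace E] [CompleteSpace E₁]
    (T S : ℝ → E →L[ℝ] E) (T₁ : ℝ → E₁ →L[ℝ] E₁) (ι : E →L[ℝ] E₁) (Am : E ≃L[ℝ] E₁)
    (hExt : ExtrapolationData T T₁ ι Am)
    (t₀ : ℝ) (ht₀ : 0 < t₀) (B : E →L[ℝ] E₁) (hB : MemSDS T₁ ι B t₀)
    (hS : IsC0Semigroup S)
    (hSgen : ∀ x y : E, C0GenRel S x y ↔ ι y = Am x + B x)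
    (hSvar : ∀ t : ℝ, 0 ≤ t → ∀ x : E,
      ι (S t x) = ι (T t x) + ∫ r in (0:ℝ)..t, T₁ (t - r) (B (S r x))) :
    MemSDSsot T₁ ι (ContinuousLinearMap.compL ℝ E E E₁ B) t₀ ∧
      GeneratedByPerturbedImpl (implemented S) ι Am
        (ContinuousLinearMap.compL ℝ E E E₁ B) := by
  classical
  obtain ⟨q, hq0, hq1, hprop⟩ := hB
  have hι := hExt.inj
  have hT₁ := hExt.c0T₁
  constructor
  · -- MemSDSsot
    constructor
    · intro x
      refine ⟨{x}, ‖B‖, norm_nonneg _, fun S' => ?_⟩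
      simpa using B.le_opNorm (S' x)
    refine ⟨q, hq0, hq1, ?_⟩
    intro F hF
    obtain ⟨hFcont, ⟨M, hM⟩, hFbe⟩ := hF
    have h0mem : (0:ℝ) ∈ Icc (0:ℝ) t₀ := ⟨le_refl 0, le_of_lt ht₀⟩
    have hM0 : 0 ≤ M := le_trans (norm_nonneg (F 0)) (hM 0 h0mem)
    choose Gc key hGcont hGbd using
      fun C : E →L[ℝ] E => hprop (fun r => F r C) (fun x => hFcont C x)
    have hInt : ∀ t ∈ Icc (0:ℝ) t₀, ∀ (C : E →L[ℝ] E) (x : E),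
        IntervalIntegrable (fun r => T₁ (t - r) (B ((F r C) x))) volume 0 t := by
      intro t ht C x
      exact conv_integrable hT₁ ht.1
        (B.continuous.comp_continuousOn ((hFcont C x).mono (Icc_subset_Icc le_rfl ht.2)))
    have hexG : ∀ t : ℝ, ∃ Gt : (E →L[ℝ] E) →L[ℝ] (E →L[ℝ] E),
        t ∈ Icc (0:ℝ) t₀ → ∀ C, Gt C = Gc C t := by
      intro t
      by_cases ht : t ∈ Icc (0:ℝ) t₀
      · have hadd : ∀ C C' : E →L[ℝ] E, Gc (C + C') t = Gc C t + Gc C' t := by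
          intro C C'
          ext x
          apply hι
          rw [ContinuousLinearMap.add_apply, map_add, key (C + C') t ht x,
            key C t ht x, key C' t ht x,
            ← intervalIntegral.integral_add (hInt t ht C x) (hInt t ht C' x)]
          apply intervalIntegral.integral_congr
          intro r hr
          simp [map_add]
        have hsmul : ∀ (a : ℝ) (C : E →L[ℝ] E), Gc (a • C) t = a • Gc C t := by
          intro a C
          ext x
          apply hι
          rw [ContinuousLinearMap.smul_apply, ι.map_smul, key (a • C) t ht x, key C t ht x,
            ← intervalIntegral.integral_smul]
          apply intervalIntegral.integral_congr
          intro r hr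
          simp [_root_.map_smul]
        have hbd : ∀ C : E →L[ℝ] E, ‖Gc C t‖ ≤ q * M * ‖C‖ := by
          intro C
          have h1 := hGbd C (M * ‖C‖) (fun s hs => by
            calc ‖F s C‖ ≤ ‖F s‖ * ‖C‖ := (F s).le_opNorm C
            _ ≤ M * ‖C‖ := mul_le_mul_of_nonneg_right (hM s hs) (norm_nonneg _)) t ht
          calc ‖Gc C t‖ ≤ q * (M * ‖C‖) := h1
          _ = q * M * ‖C‖ := by ring
        refine ⟨LinearMap.mkContinuous
          { toFun := fun C => Gc C t
            map_add' := hadd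
            map_smul' := hsmul } (q * M) hbd, fun _ C => rfl⟩
      · exact ⟨0, fun h => absurd h ht⟩
    choose G hG using hexG
    have hGbd' : ∀ c : ℝ, (∀ s ∈ Icc (0:ℝ) t₀, ‖F s‖ ≤ c) →
        ∀ t ∈ Icc (0:ℝ) t₀, ‖G t‖ ≤ q * c := by
      intro c hc t ht
      have hc0 : 0 ≤ c := le_trans (norm_nonneg (F 0)) (hc 0 h0mem)
      apply ContinuousLinearMap.opNorm_le_bound _ (mul_nonneg hq0 hc0)
      intro C
      rw [hG t ht C]
      have h1 := hGbd C (c * ‖C‖) (fun s hs => by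
        calc ‖F s C‖ ≤ ‖F s‖ * ‖C‖ := (F s).le_opNorm C
        _ ≤ c * ‖C‖ := mul_le_mul_of_nonneg_right (hc s hs) (norm_nonneg _)) t ht
      calc ‖Gc C t‖ ≤ q * (c * ‖C‖) := h1
      _ = q * c * ‖C‖ := by ring
    refine ⟨G, ⟨?_, ⟨q * M, fun t ht => hGbd' M hM t ht⟩, ?_⟩, ?_, hGbd'⟩
    · intro C x
      exact (hGcont C x).congr (fun t ht => by rw [hG t ht C])
    · -- bi-equicontinuity
      intro u hu hu0 x ε hε
      by_cases hx : x = 0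
      · exact ⟨0, fun n hn t ht => by simp [hx, hε]⟩
      · obtain ⟨f, hf1, hfx⟩ := exists_dual_vector ℝ x (norm_ne_zero_iff.2 hx)
        have hxpos : 0 < ‖x‖ := norm_pos_iff.2 hx
        set P : E →L[ℝ] E := f.smulRight (‖x‖⁻¹ • x) with hP
        have hPx : P x = x := by
          simp only [hP, ContinuousLinearMap.smulRight_apply, hfx, smul_smul]
          rw [RCLike.ofReal_real_eq_id]
          simp [mul_inv_cancel₀ (ne_of_gt hxpos)]
        obtain ⟨N, hN⟩ := hFbe u hu hu0 x (ε / 2) (by positivity)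
        refine ⟨N, fun n hn t ht => ?_⟩
        obtain ⟨G', hk', hgc', hgb'⟩ := hprop (fun r => (F r (u n)).comp P)
          (fun y => by simpa using hFcont (u n) (P y))
        have heq : G' t x = G t (u n) x := by
          apply hι
          rw [hk' t ht x, hG t ht (u n), key (u n) t ht x]
          apply intervalIntegral.integral_congr
          intro r hr
          simp [hPx]
        have hFb : ∀ s ∈ Icc (0:ℝ) t₀, ‖(F s (u n)).comp P‖ ≤ ‖x‖⁻¹ * (ε / 2) := by
          intro s hs
          apply ContinuousLinearMap.opNorm_le_bound _ (by positivity)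
          intro y
          have hy : ((F s (u n)).comp P) y = f y • (‖x‖⁻¹ • (F s (u n)) x) := by
            simp [hP, ContinuousLinearMap.smulRight_apply, smul_smul, _root_.map_smul]
          rw [hy, norm_smul, norm_smul]
          have h2 : ‖f y‖ ≤ ‖y‖ := by
            calc ‖f y‖ ≤ ‖f‖ * ‖y‖ := f.le_opNorm y
            _ = ‖y‖ := by rw [hf1, one_mul]
          have h3 : ‖(‖x‖⁻¹ : ℝ)‖ = ‖x‖⁻¹ := Real.norm_of_nonneg (by positivity)
          rw [h3]
          have h4 : ‖(F s (u n)) x‖ ≤ ε / 2 := le_of_lt (hN n hn s hs)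
          calc ‖f y‖ * (‖x‖⁻¹ * ‖(F s (u n)) x‖)
              ≤ ‖y‖ * (‖x‖⁻¹ * (ε / 2)) := by
                apply mul_le_mul h2 (mul_le_mul_of_nonneg_left h4 (by positivity))
                  (by positivity) (norm_nonneg _)
          _ = ‖x‖⁻¹ * (ε / 2) * ‖y‖ := by ring
        have hgn := hgb' (‖x‖⁻¹ * (ε / 2)) hFb t ht
        have hfin : ‖(G t (u n)) x‖ ≤ q * (‖x‖⁻¹ * (ε / 2)) * ‖x‖ := by
          rw [← heq]
          exact le_trans ((G' t).le_opNorm x)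
            (mul_le_mul_of_nonneg_right hgn (norm_nonneg x))
        calc ‖(G t (u n)) x‖ ≤ q * (‖x‖⁻¹ * (ε / 2)) * ‖x‖ := hfin
        _ = q * (ε / 2) * (‖x‖⁻¹ * ‖x‖) := by ring
        _ = q * (ε / 2) := by rw [inv_mul_cancel₀ (ne_of_gt hxpos), mul_one]
        _ < ε := by nlinarith
    · intro t ht C x
      rw [hG t ht C]
      simpa using key C t ht x
  · -- GeneratedByPerturbedImpl
    obtain ⟨M₁, hM₁1, hM₁⟩ := hS.bound 1
    constructor
    · constructor
      · apply ContinuousLinearMap.ext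
        intro C
        simp [implemented, hS.map_zero, ContinuousLinearMap.one_def, ContinuousLinearMap.id_comp]
      · intro s t hs ht
        apply ContinuousLinearMap.ext
        intro C
        simp [implemented, hS.map_add s t hs ht, ContinuousLinearMap.comp_assoc]
      · intro C x
        have h1 := hS.strongCont (C x)
        have h2 : (fun t => ((implemented S t) C) x) = fun t => S t (C x) := by
          funext t; simp [implemented]
        rw [h2]; exact h1
      · obtain ⟨M, hM1, ω, hMω⟩ := hS.expBound
        refine ⟨M, hM1, ω, fun t ht => ?_⟩
        have hle : ‖implemented S t‖ ≤ ‖S t‖ := by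
          apply ContinuousLinearMap.opNorm_le_bound _ (norm_nonneg _)
          intro C
          simp only [implemented, ContinuousLinearMap.compL_apply]
          exact ContinuousLinearMap.opNorm_comp_le _ _
        exact hle.trans (hMω t ht)
      · intro a ha u hu hu0 x ε hε
        obtain ⟨Ma, hMa1, hMa⟩ := hS.bound a
        have hMapos : 0 < Ma := lt_of_lt_of_le one_pos hMa1
        obtain ⟨N, hN⟩ := Metric.tendsto_atTop.1 (hu0 x) (ε / Ma) (by positivity)
        refine ⟨N, fun n hn t ht => ?_⟩
        have h1 : ((implemented S t) (u n)) x = S t ((u n) x) := by simp [implemented]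
        rw [h1]
        have hdist := hN n hn
        rw [dist_zero_right] at hdist
        calc ‖S t ((u n) x)‖ ≤ Ma * ‖(u n) x‖ := le_trans ((S t).le_opNorm _)
              (mul_le_mul_of_nonneg_right (hMa t ht) (norm_nonneg _))
        _ < Ma * (ε / Ma) := (mul_lt_mul_iff_right₀ hMapos).2 hdist
        _ = ε := by field_simp
    · intro C Y
      have himpl : ∀ x : E, (fun t : ℝ => t⁻¹ • (((implemented S t) C) x - C x)) =
          fun t : ℝ => t⁻¹ • (S t (C x) - C x) := by
        intro x; funext t; simp [implemented]
      constructor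
      · intro h
        apply ContinuousLinearMap.ext
        intro x
        have h1 : C0GenRel S (C x) (Y x) := by
          have h2 := h.1 x
          rw [himpl x] at h2
          exact h2
        have h3 := (hSgen (C x) (Y x)).1 h1
        simpa using h3
      · intro h
        have hgen : ∀ x : E, C0GenRel S (C x) (Y x) := by
          intro x
          apply (hSgen (C x) (Y x)).2
          have h2 := congrArg (fun (R : E →L[ℝ] E₁) => R x) h
          simpa using h2
        constructor
        · intro x
          rw [himpl x]
          exact hgen x
        · refine ⟨M₁ * ‖Y‖, fun t ht => ?_⟩
          have hkey : ∀ x : E, ‖S t (C x) - C x‖ ≤ M₁ * ‖Y‖ * t * ‖x‖ := by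
            intro x
            have hcont : ContinuousOn (fun s => S s (C x)) (Icc 0 1) :=
              (hS.strongCont (C x)).mono (fun s hs => hs.1)
            have hders : ∀ s ∈ Ico (0:ℝ) 1,
                HasDerivWithinAt (fun r => S r (C x)) (S s (Y x)) (Ici s) s :=
              fun s hs => hS.hasDerivWithinAt (hgen x) hs.1
            have hbd : ∀ s ∈ Ico (0:ℝ) 1, ‖S s (Y x)‖ ≤ M₁ * (‖Y‖ * ‖x‖) := by
              intro s hs
              calc ‖S s (Y x)‖ ≤ ‖S s‖ * ‖Y x‖ := (S s).le_opNorm _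
              _ ≤ M₁ * (‖Y‖ * ‖x‖) := mul_le_mul (hM₁ s ⟨hs.1, le_of_lt hs.2⟩)
                  (Y.le_opNorm x) (norm_nonneg _) (by linarith)
            have hm := norm_image_sub_le_of_norm_deriv_right_le_segment hcont hders hbd t
              ⟨le_of_lt ht.1, ht.2⟩
            rw [hS.map_zero] at hm
            simp only [ContinuousLinearMap.one_apply, sub_zero] at hm
            calc ‖S t (C x) - C x‖ ≤ M₁ * (‖Y‖ * ‖x‖) * t := hm
            _ = M₁ * ‖Y‖ * t * ‖x‖ := by ring
          have hnn : 0 ≤ M₁ * ‖Y‖ * t := by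
            have : (0:ℝ) ≤ M₁ := le_trans zero_le_one hM₁1
            have ht0 := le_of_lt ht.1
            positivity
          apply ContinuousLinearMap.opNorm_le_bound _ hnn
          intro x
          have h1 : ((implemented S t) C - C) x = S t (C x) - C x := by simp [implemented]
          rw [h1]
          exact hkey x
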